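/- For n ≥ 1, the number of rooted labeled trees on vertex set [n] in which the root is larger than all of its children (immediate descendants) is (n-1)^(n-1). -/

import Mathlib

open Finset

namespace Stmt10

set_option linter.unusedSectionVars false
set_option maxHeartbeats 1000000



lemma BL (a k x : ℕ) (ha : 1 ≤ a) :
    ∑ j ∈ range (a+1), j * a.choose j * (k ^ j * x ^ (a - j)) =
      a * k * (k + x) ^ (a-1) := by
  rw [Finset.sum_range_succ']
  simp only [Nat.zero_eq, zero_mul, add_zero, Nat.choose_zero_right]
  have hreidx : ∀ i ∈ range a,
      (i+1) * a.choose (i+1) * (k ^ (i+1) * x ^ (a - (i+1))) =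
      a * k * ((a-1).choose i * (k ^ i * x ^ ((a-1) - i))) := by
    intro i _
    have h1 : (i+1) * a.choose (i+1) = a * (a-1).choose i := by
      have h := Nat.add_one_mul_choose_eq (a-1) i
      rw [Nat.sub_add_cancel ha] at h
      rw [mul_comm]; exact h.symm
    have h2 : a - (i+1) = (a-1) - i := by omega
    calc (i+1) * a.choose (i+1) * (k ^ (i+1) * x ^ (a - (i+1)))
        = ((i+1) * a.choose (i+1)) * (k ^ (i+1) * x ^ ((a-1) - i)) := by rw [h2]
      _ = (a * (a-1).choose i) * (k ^ (i+1) * x ^ ((a-1) - i)) := by rw [h1]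
      _ = a * k * ((a-1).choose i * (k ^ i * x ^ ((a-1) - i))) := by rw [pow_succ]; ring
  rw [Finset.sum_congr rfl hreidx, ← Finset.mul_sum]
  congr 1
  rw [add_pow]
  have h3 : a - 1 + 1 = a := by omega
  rw [h3]
  apply Finset.sum_congr rfl
  intro i _
  simp [Nat.cast_id]
  ring

lemma AL (t : ℕ) : ∀ u, u ≤ t →
    (∑ r ∈ range (u+1), r * (t^(u-r) * (t+1)^(r-1))) + (t-u)*(t+1)^u = t^(u+1) := by
  intro u
  induction u with
  | zero => simp
  | succ u ih =>
    intro hu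
    have hu' : u ≤ t := by omega
    have key : (∑ r ∈ range (u+2), r * (t^(u+1-r) * (t+1)^(r-1))) =
        t * (∑ r ∈ range (u+1), r * (t^(u-r) * (t+1)^(r-1))) + (u+1) * (t+1)^u := by
      rw [Finset.sum_range_succ, Finset.mul_sum]
      have h : ∀ r ∈ range (u+1), r * (t^(u+1-r) * (t+1)^(r-1)) =
          t * (r * (t^(u-r) * (t+1)^(r-1))) := by
        intro r hr
        rw [Finset.mem_range] at hr
        rcases Nat.eq_zero_or_pos r with h0 | h0
        · simp [h0]
        · have : u + 1 - r = (u - r) + 1 := by omega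
          rw [this]; ring
      rw [Finset.sum_congr rfl h]
      simp
    rw [key]
    have ihv := ih hu'
    set A := ∑ r ∈ range (u+1), r * (t^(u-r) * (t+1)^(r-1)) with hA
    set B := (t+1)^u with hB
    set d := t - u - 1 with hd
    have h1 : t - u = d + 1 := by omega
    have h2 : t - (u+1) = d := by omega
    have huv : u + 1 + d = t := by omega
    have hcoef : (u+1) + d*(t+1) = t*(d+1) := by rw [← huv]; ring
    rw [h2]
    calc t * A + (u+1) * B + d * (t+1)^(u+1)
        = t*A + ((u+1) + d*(t+1))*B := by rw [show (t+1)^(u+1) = (t+1)*B from by rw [hB]; ring]; ring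
      _ = t*A + (t*(d+1))*B := by rw [hcoef]
      _ = t*(A + (d+1)*B) := by ring
      _ = t*(A + (t-u)*B) := by rw [h1]
      _ = t * t^(u+1) := by rw [ihv]
      _ = t^(u+2) := by ring







variable {W : Type} [DecidableEq W] [Fintype W]

def IsForest (S : Finset W) (p : W → W) : Prop :=
  (∀ s ∈ S, p s = s) ∧ ∀ v : W, ∃ k, p^[k] v ∈ S

def Jof (S : Finset W) (p : W → W) : Finset {x : W // x ∉ S} :=
  univ.filter (fun x => p x.1 ∈ S)

def theta (S : Finset W)
    (y : Σ J : Finset {x : W // x ∉ S},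
      ({j // j ∈ J} → {s // s ∈ S}) × {q : {x : W // x ∉ S} → {x : W // x ∉ S} // IsForest J q}) :
    W → W :=
  fun x =>
    if hx : x ∈ S then x
    else if hJ : (⟨x, hx⟩ : {x : W // x ∉ S}) ∈ y.1 then (y.2.1 ⟨⟨x, hx⟩, hJ⟩ : W)
    else ((y.2.2.1 ⟨x, hx⟩ : {x : W // x ∉ S}) : W)

lemma theta_mem_S (S : Finset W) (y) (x : W) (hx : x ∈ S) : theta S y x = x := by
  simp [theta, hx]

lemma theta_mem_J (S : Finset W) (y) (x : {x : W // x ∉ S}) (hJ : x ∈ y.1) :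
    theta S y x.1 = (y.2.1 ⟨x, hJ⟩ : W) := by
  simp only [theta, dif_neg x.2]
  rw [dif_pos hJ]

lemma theta_other (S : Finset W) (y) (x : {x : W // x ∉ S}) (hJ : x ∉ y.1) :
    theta S y x.1 = ((y.2.2.1 x : {x : W // x ∉ S}) : W) := by
  simp only [theta, dif_neg x.2]
  rw [dif_neg hJ]

lemma theta_iterate (S : Finset W) (y) (x : {x : W // x ∉ S}) :
    ∀ i, (∀ j, j < i → y.2.2.1^[j] x ∉ y.1) →
      (theta S y)^[i] x.1 = ((y.2.2.1^[i] x : {x : W // x ∉ S}) : W) := by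
  intro i
  induction i with
  | zero => intro _; simp
  | succ i ih =>
    intro hcond
    rw [Function.iterate_succ_apply', Function.iterate_succ_apply',
      ih (fun j hj => hcond j (by omega))]
    exact theta_other S y _ (hcond i (by omega))

lemma theta_isForest (S : Finset W) (y) : IsForest S (theta S y) := by
  constructor
  · intro s hs; exact theta_mem_S S y s hs
  · intro v
    by_cases hv : v ∈ S
    · exact ⟨0, by simpa using hv⟩
    · set x : {x : W // x ∉ S} := ⟨v, hv⟩ with hxdef
      obtain ⟨k, hk⟩ := y.2.2.2.2 x
      have hex : ∃ k, y.2.2.1^[k] x ∈ y.1 := ⟨k, hk⟩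
      have hKmem : y.2.2.1^[Nat.find hex] x ∈ y.1 := Nat.find_spec hex
      have hmin : ∀ j, j < Nat.find hex → y.2.2.1^[j] x ∉ y.1 :=
        fun j hj => Nat.find_min hex hj
      refine ⟨Nat.find hex + 1, ?_⟩
      rw [Function.iterate_succ_apply', theta_iterate S y x (Nat.find hex) hmin,
        theta_mem_J S y _ hKmem]
      exact (y.2.1 _).2

lemma Jof_theta (S : Finset W) (y) : Jof S (theta S y) = y.1 := by
  ext x
  simp only [Jof, mem_filter, mem_univ, true_and]
  constructor
  · intro hxS
    by_contra hJ
    rw [theta_other S y x hJ] at hxS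
    exact (y.2.2.1 x).2 hxS
  · intro hJ
    rw [theta_mem_J S y x hJ]
    exact (y.2.1 _).2

lemma theta_injective (S : Finset W) : Function.Injective (theta S) := by
  intro y y' h
  obtain ⟨J, f, q⟩ := y
  obtain ⟨J', f', q'⟩ := y'
  have hJ : J = J' := by
    have h1 := Jof_theta S ⟨J, f, q⟩
    have h2 := Jof_theta S ⟨J', f', q'⟩
    rw [h] at h1
    exact h1.symm.trans h2
  subst hJ
  have hf : f = f' := by
    funext x
    apply Subtype.ext
    have e1 := theta_mem_J S ⟨J, f, q⟩ x.1 x.2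
    have e2 := theta_mem_J S ⟨J, f', q'⟩ x.1 x.2
    simp only at e1 e2
    rw [h] at e1
    rw [e2] at e1
    exact e1.symm
  have hq : q = q' := by
    apply Subtype.ext
    funext x
    by_cases hx : x ∈ J
    · rw [q.2.1 x hx, q'.2.1 x hx]
    · apply Subtype.ext
      have e1 := theta_other S ⟨J, f, q⟩ x hx
      have e2 := theta_other S ⟨J, f', q'⟩ x hx
      simp only at e1 e2
      rw [h] at e1
      rw [e2] at e1
      exact e1.symm
  rw [hf, hq]

lemma theta_surj (S : Finset W) (p : W → W) (hp : IsForest S p) :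
    ∃ y, theta S y = p ∧ y.1 = Jof S p := by
  classical
  set q : {x : W // x ∉ S} → {x : W // x ∉ S} :=
    fun x => if h : p x.1 ∈ S then x else ⟨p x.1, h⟩ with hqdef
  have hqfix : ∀ x ∈ Jof S p, q x = x := by
    intro x hx
    have hxS : p x.1 ∈ S := (mem_filter.mp hx).2
    simp [hqdef, hxS]
  have hqstep : ∀ (z : {x : W // x ∉ S}), p z.1 ∉ S → (q z : W) = p z.1 := by
    intro z hz
    simp [hqdef, hz]
  have hqreach : ∀ x, ∃ k, q^[k] x ∈ Jof S p := by
    intro x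
    have hex : ∃ k, p^[k] x.1 ∈ S := hp.2 x.1
    have hKmem : p^[Nat.find hex] x.1 ∈ S := Nat.find_spec hex
    have hmin : ∀ j, j < Nat.find hex → p^[j] x.1 ∉ S := fun j hj => Nat.find_min hex hj
    set K := Nat.find hex with hK
    have hK1 : 1 ≤ K := by
      rcases Nat.eq_zero_or_pos K with h0 | h0
      · exfalso; apply x.2; rw [h0] at hKmem; simpa using hKmem
      · exact h0
    have claim : ∀ i, i ≤ K - 1 → (q^[i] x : W) = p^[i] x.1 := by
      intro i
      induction i with
      | zero => intro _; simp
      | succ i ih =>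
        intro hi
        have hii : i ≤ K - 1 := by omega
        have hval := ih hii
        have hnot : p (p^[i] x.1) ∉ S := by
          have h2 : p^[i+1] x.1 ∉ S := hmin (i+1) (by omega)
          rwa [Function.iterate_succ_apply'] at h2
        rw [Function.iterate_succ_apply', Function.iterate_succ_apply']
        rw [show q (q^[i] x) = (q (q^[i] x) : {x : W // x ∉ S}) from rfl]
        have := hqstep (q^[i] x) (by rw [hval]; exact hnot)
        rw [this, hval]
    refine ⟨K - 1, ?_⟩
    simp only [Jof, mem_filter, mem_univ, true_and]
    rw [claim (K-1) le_rfl]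
    have hfin : p (p^[K-1] x.1) = p^[K] x.1 := by
      have h3 : K - 1 + 1 = K := by omega
      conv_rhs => rw [← h3]
      rw [Function.iterate_succ_apply']
    rw [hfin]; exact hKmem
  refine ⟨⟨Jof S p, fun x => ⟨p x.1.1, (mem_filter.mp x.2).2⟩, ⟨q, hqfix, hqreach⟩⟩, ?_, rfl⟩
  funext x
  by_cases hx : x ∈ S
  · rw [theta_mem_S _ _ _ hx, hp.1 x hx]
  · by_cases hJ : (⟨x, hx⟩ : {x : W // x ∉ S}) ∈ Jof S p
    · rw [theta_mem_J _ _ ⟨x, hx⟩ hJ]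
    · rw [theta_other _ _ ⟨x, hx⟩ hJ]
      simp only [Jof, mem_filter, mem_univ, true_and] at hJ
      exact hqstep ⟨x, hx⟩ hJ



lemma master (S : Finset W) (Pr : Finset {x : W // x ∉ S} → Prop) [DecidablePred Pr] :
    Nat.card {p : W → W // IsForest S p ∧ Pr (Jof S p)} =
      ∑ J ∈ univ.filter Pr,
        S.card ^ J.card * Nat.card {q : {x : W // x ∉ S} → {x : W // x ∉ S} // IsForest J q} := by
  classical
  have e1 : {y : (Σ J : Finset {x : W // x ∉ S}, ({j // j ∈ J} → {s // s ∈ S}) × {q : {x : W // x ∉ S} → {x : W // x ∉ S} // IsForest J q}) // Pr y.1} ≃ {p : W → W // IsForest S p ∧ Pr (Jof S p)} := by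
    refine Equiv.ofBijective
      (fun y => ⟨theta S y.1, theta_isForest S y.1, by rw [Jof_theta]; exact y.2⟩) ⟨?_, ?_⟩
    · intro y y' h
      apply Subtype.ext
      exact theta_injective S (congrArg Subtype.val h)
    · rintro ⟨p, hp, hPr⟩
      obtain ⟨y, hy, hy1⟩ := theta_surj S p hp
      exact ⟨⟨y, by rw [hy1]; exact hPr⟩, by simp [hy]⟩
  rw [← Nat.card_congr e1]
  have e2 : {y : (Σ J : Finset {x : W // x ∉ S}, ({j // j ∈ J} → {s // s ∈ S}) × {q : {x : W // x ∉ S} → {x : W // x ∉ S} // IsForest J q}) // Pr y.1} ≃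
      Σ J : Subtype Pr, ({j // j ∈ J.1} → {s // s ∈ S}) × {q : {x : W // x ∉ S} → {x : W // x ∉ S} // IsForest J.1 q} :=
    Equiv.subtypeSigmaEquiv _ _
  rw [Nat.card_congr e2]
  letI : ∀ J : Finset {x : W // x ∉ S}, Fintype {q : {x : W // x ∉ S} → {x : W // x ∉ S} // IsForest J q} := fun J => Fintype.ofFinite _
  rw [Nat.card_eq_fintype_card, Fintype.card_sigma]
  rw [Finset.sum_subtype (p := Pr) (univ.filter Pr) (fun x => by simp) (fun J => S.card ^ J.card *
    Nat.card {q : {x : W // x ∉ S} → {x : W // x ∉ S} // IsForest J q})]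
  apply Finset.sum_congr rfl
  intro J _
  rw [Fintype.card_prod, ← Nat.card_eq_fintype_card (α := {j // j ∈ (J : Finset {x : W // x ∉ S})} → {s // s ∈ S}),
    ← Nat.card_eq_fintype_card]
  rw [Nat.card_fun]
  simp [Nat.card_eq_fintype_card]

lemma forest_empty_aux (J : Finset W) (hJ : J = ∅) (hW : Nonempty W) :
    Nat.card {q : W → W // IsForest J q} = 0 := by
  rw [Nat.card_eq_zero]
  left
  constructor
  rintro ⟨q, hq1, hq2⟩
  obtain ⟨v⟩ := hW
  obtain ⟨k, hk⟩ := hq2 v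
  rw [hJ] at hk
  simp at hk

lemma FC : ∀ (m : ℕ) (W : Type) [DecidableEq W] [Fintype W] (S : Finset W),
    Fintype.card W = m → S.Nonempty →
    Nat.card {p : W → W // IsForest S p} * m = S.card * m ^ (m - S.card) := by
  intro m
  induction m using Nat.strong_induction_on with
  | _ m ih =>
    intro W _ _ S hm hS
    classical
    have hkm : S.card ≤ m := hm ▸ Finset.card_le_univ S
    have hk1 : 1 ≤ S.card := Finset.card_pos.mpr hS
    have hcompl : Fintype.card {x : W // x ∉ S} = m - S.card := by
      rw [← hm, Fintype.card_subtype_compl]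
      congr 1
      simp [Fintype.card_subtype]
    set k := S.card with hk
    set M := m - k with hM
    rcases Nat.eq_zero_or_pos M with hM0 | hMpos
    · have hall : ∀ x : W, x ∈ S := by
        intro x
        by_contra hx
        have h1 : 0 < Fintype.card {x : W // x ∉ S} := Fintype.card_pos_iff.mpr ⟨⟨x, hx⟩⟩
        omega
      have h1 : Nat.card {p : W → W // IsForest S p} = 1 := by
        rw [Nat.card_eq_one_iff_unique]
        refine ⟨⟨?_⟩, ⟨⟨id, fun s _ => rfl, fun v => ⟨0, by simpa using hall v⟩⟩⟩⟩
        rintro ⟨p, hp⟩ ⟨p', hp'⟩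
        apply Subtype.ext; funext x
        show p x = p' x
        rw [hp.1 x (hall x), hp'.1 x (hall x)]
      rw [h1, hM0]
      have : k = m := by omega
      simp [this]
    · have hMlt : M < m := by omega
      have hWne : Nonempty {x : W // x ∉ S} := Fintype.card_pos_iff.mp (by omega)
      have hterm : ∀ J : Finset {x : W // x ∉ S},
          Nat.card {q : {x : W // x ∉ S} → {x : W // x ∉ S} // IsForest J q} * M =
            J.card * M ^ (M - J.card) := by
        intro J
        rcases J.eq_empty_or_nonempty with hJe | hJne
        · rw [forest_empty_aux J hJe hWne, hJe]
          simp
        · exact ih M hMlt {x : W // x ∉ S} J hcompl hJne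
      have hsimp : Nat.card {p : W → W // IsForest S p} =
          Nat.card {p : W → W // IsForest S p ∧ (fun _ => True) (Jof S p)} :=
        Nat.card_congr (Equiv.subtypeEquivRight (by simp))
      have hsum := master S (fun _ => True)
      rw [← hsimp] at hsum
      have hfilter : (univ.filter (fun (_ : Finset {x : W // x ∉ S}) => True)) = univ := by
        simp
      rw [hfilter] at hsum
      -- E1 : N * M = k * M * m^(M-1)
      have hkMm : k + M = m := by omega
      have E1 : Nat.card {p : W → W // IsForest S p} * M = M * k * m ^ (M - 1) := by
        rw [hsum, Finset.sum_mul]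
        have step1 : ∀ J ∈ (univ : Finset (Finset {x : W // x ∉ S})),
            k ^ J.card * Nat.card {q : {x : W // x ∉ S} → {x : W // x ∉ S} // IsForest J q} * M =
            k ^ J.card * (J.card * M ^ (M - J.card)) := by
          intro J _
          rw [mul_assoc, hterm J]
        rw [Finset.sum_congr rfl step1]
        rw [← Finset.powerset_univ, Finset.sum_powerset]
        have step2 : ∀ j ∈ range ((univ : Finset (Finset {x : W // x ∉ S})).card + 1), True := by
          intro _ _; trivial
        have hcardu : (univ : Finset {x : W // x ∉ S}).card = M := by
          rw [← hcompl]; simp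
        calc ∑ j ∈ range ((univ : Finset {x : W // x ∉ S}).card + 1),
              ∑ J ∈ powersetCard j (univ : Finset {x : W // x ∉ S}),
                k ^ J.card * (J.card * M ^ (M - J.card))
            = ∑ j ∈ range (M+1), (M.choose j) • (k ^ j * (j * M ^ (M - j))) := by
              rw [hcardu]
              apply Finset.sum_congr rfl
              intro j _
              have := Finset.sum_powersetCard j (univ : Finset {x : W // x ∉ S})
                (fun c => k ^ c * (c * M ^ (M - c)))
              rw [this, hcardu]
          _ = ∑ j ∈ range (M+1), j * M.choose j * (k ^ j * M ^ (M - j)) := by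
              apply Finset.sum_congr rfl
              intro j _
              rw [smul_eq_mul]; ring
          _ = M * k * (k + M) ^ (M - 1) := BL M k M hMpos
          _ = M * k * m ^ (M - 1) := by rw [hkMm]
      have hNval : Nat.card {p : W → W // IsForest S p} = k * m ^ (M - 1) := by
        apply Nat.eq_of_mul_eq_mul_right hMpos
        rw [E1]; ring
      rw [hNval]
      have : m ^ (M - 1) * m = m ^ M := by
        rw [← pow_succ]
        congr 1
        omega
      rw [mul_assoc, this]



/-- The parent-function predicate for an uprooted tree rooted at `r`. -/
def UpForest {n : ℕ} (r : Fin n) (p : Fin n → Fin n) : Prop :=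
  IsForest {r} p ∧ ∀ x ∈ Jof {r} p, x.1 < r

lemma card_smalls {n : ℕ} (r : Fin n) :
    (univ.filter (fun x : {x : Fin n // x ∉ ({r} : Finset (Fin n))} => x.1 < r)).card = r.1 := by
  rw [← Fin.card_Iio r]
  apply Finset.card_bij (fun x _ => x.1)
  · intro x hx
    simp only [mem_filter] at hx
    simpa using hx.2
  · intro x hx y hy h
    exact Subtype.ext h
  · intro y hy
    rw [mem_Iio] at hy
    refine ⟨⟨y, by simp [Fin.ne_of_lt hy]⟩, ?_, rfl⟩
    simp [hy]

lemma card_compl_singleton {n : ℕ} (r : Fin n) :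
    Fintype.card {x : Fin n // x ∉ ({r} : Finset (Fin n))} = n - 1 := by
  rw [Fintype.card_subtype_compl]
  simp [Fintype.card_subtype]

/-- key count : t * |UpForest r| = r * t^(t-r) * (t+1)^(r-1), where t = n-1 -/
lemma card_upforest {n : ℕ} (hn : 2 ≤ n) (r : Fin n) :
    Nat.card {p : Fin n → Fin n // UpForest r p} * (n-1) =
      r.1 * ((n-1)^(n-1-r.1) * n^(r.1-1)) := by
  classical
  set t := n - 1 with ht
  have htpos : 1 ≤ t := by omega
  have hW' : Fintype.card {x : Fin n // x ∉ ({r} : Finset (Fin n))} = t := card_compl_singleton r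
  have hWne : Nonempty {x : Fin n // x ∉ ({r} : Finset (Fin n))} := by
    apply Fintype.card_pos_iff.mp
    omega
  have hmaster := master ({r} : Finset (Fin n)) (fun J => ∀ x ∈ J, x.1 < r)
  have hQ : Nat.card {p : Fin n → Fin n // UpForest r p} =
      ∑ J ∈ univ.filter (fun J => ∀ x ∈ J, x.1 < r),
        Nat.card {q : {x : Fin n // x ∉ ({r} : Finset (Fin n))} →
          {x : Fin n // x ∉ ({r} : Finset (Fin n))} // IsForest J q} := by
    rw [show {p : Fin n → Fin n // UpForest r p} =
      {p : Fin n → Fin n // IsForest {r} p ∧ (fun J => ∀ x ∈ J, x.1 < r) (Jof {r} p)} from rfl]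
    rw [hmaster]
    apply Finset.sum_congr rfl
    intro J _
    simp
  -- filter = powerset of smalls
  set smalls := univ.filter (fun x : {x : Fin n // x ∉ ({r} : Finset (Fin n))} => x.1 < r)
    with hsmalls
  have hfp : (univ.filter (fun J : Finset {x : Fin n // x ∉ ({r} : Finset (Fin n))} =>
      ∀ x ∈ J, x.1 < r)) = smalls.powerset := by
    ext J
    simp only [mem_filter, mem_univ, true_and, mem_powerset, hsmalls]
    constructor
    · intro h x hx
      simp only [mem_filter, mem_univ, true_and]
      exact h x hx
    · intro h x hx
      have := h hx
      simp only [mem_filter] at this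
      exact this.2
  rw [hQ, hfp, Finset.sum_mul]
  have hterm : ∀ J ∈ smalls.powerset,
      Nat.card {q : {x : Fin n // x ∉ ({r} : Finset (Fin n))} →
        {x : Fin n // x ∉ ({r} : Finset (Fin n))} // IsForest J q} * t =
      J.card * t ^ (t - J.card) := by
    intro J _
    rcases J.eq_empty_or_nonempty with hJe | hJne
    · rw [forest_empty_aux J hJe hWne, hJe]; simp
    · exact FC t {x : Fin n // x ∉ ({r} : Finset (Fin n))} J hW' hJne
  rw [Finset.sum_congr rfl hterm, Finset.sum_powerset]
  have hsc : smalls.card = r.1 := card_smalls r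
  rw [hsc]
  have hstep : ∀ j ∈ range (r.1+1),
      (∑ J ∈ powersetCard j smalls, (J.card * t ^ (t - J.card))) =
        r.1.choose j • (j * t ^ (t - j)) := by
    intro j _
    have := Finset.sum_powersetCard j smalls (fun c => c * t ^ (t - c))
    rw [this, hsc]
  rw [Finset.sum_congr rfl hstep]
  -- now pure algebra: ∑_{j ≤ r} C(r,j) j t^(t-j) = r * t^(t-r) * (t+1)^(r-1)
  rcases Nat.eq_zero_or_pos r.1 with hr0 | hrpos
  · rw [hr0]; simp
  · have hrt : r.1 ≤ t := by have := r.2; omega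
    have split : ∀ j ∈ range (r.1+1),
        r.1.choose j • (j * t ^ (t - j)) =
        t ^ (t - r.1) * (j * r.1.choose j * (1 ^ j * t ^ (r.1 - j))) := by
      intro j hj
      rw [mem_range] at hj
      have : t - j = (t - r.1) + (r.1 - j) := by omega
      rw [smul_eq_mul, this, pow_add]
      ring
    rw [Finset.sum_congr rfl split, ← Finset.mul_sum, BL r.1 1 t hrpos]
    have h1t : 1 + t = t + 1 := by ring
    rw [h1t]
    have : t + 1 = n := by omega
    rw [this]
    ring



lemma card_Q {n : ℕ} (hn : 2 ≤ n) :
    Nat.card {q : Fin n × (Fin n → Fin n) // UpForest q.1 q.2} = (n-1)^(n-1) := by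
  classical
  set t := n - 1 with ht
  have htpos : 0 < t := by omega
  have e : {q : Fin n × (Fin n → Fin n) // UpForest q.1 q.2} ≃
      Σ r : Fin n, {p : Fin n → Fin n // UpForest r p} :=
    Equiv.subtypeProdEquivSigmaSubtype _
  rw [Nat.card_congr e]
  letI : ∀ r : Fin n, Fintype {p : Fin n → Fin n // UpForest r p} := fun r => Fintype.ofFinite _
  rw [Nat.card_eq_fintype_card, Fintype.card_sigma]
  have key : (∑ r : Fin n, Fintype.card {p : Fin n → Fin n // UpForest r p}) * t = t^(t+1) := by
    rw [Finset.sum_mul]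
    have hterm : ∀ r : Fin n, Fintype.card {p : Fin n → Fin n // UpForest r p} * t =
        r.1 * (t^(t-r.1) * (t+1)^(r.1-1)) := by
      intro r
      rw [← Nat.card_eq_fintype_card]
      have h2 := card_upforest hn r
      have h3 : t + 1 = n := by omega
      rw [h3]
      rw [show Nat.card {p : Fin n → Fin n // UpForest r p} * t =
        Nat.card {p : Fin n → Fin n // UpForest r p} * (n-1) from rfl, h2]
    rw [Finset.sum_congr rfl (fun r _ => hterm r)]
    have h4 : n = t + 1 := by omega
    rw [show (∑ r : Fin n, r.1 * (t^(t-r.1) * (t+1)^(r.1-1))) =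
      ∑ i ∈ range n, i * (t^(t-i) * (t+1)^(i-1)) from
        Fin.sum_univ_eq_sum_range (fun i => i * (t^(t-i) * (t+1)^(i-1))) n]
    rw [h4]
    have := AL t t le_rfl
    simpa using this
  have h5 : t^(t+1) = t^t * t := by rw [pow_succ]
  rw [h5] at key
  exact Nat.eq_of_mul_eq_mul_right htpos key



def graphOf {n : ℕ} (r : Fin n) (p : Fin n → Fin n) : SimpleGraph (Fin n) :=
  SimpleGraph.fromRel (fun a b => a ≠ r ∧ p a = b)

section Stage1

variable {n : ℕ} {r : Fin n} {p : Fin n → Fin n}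

/- basic unpacking -/
lemma up_fix (h : UpForest r p) : p r = r := h.1.1 r (mem_singleton_self r)

lemma up_reach (h : UpForest r p) (v : Fin n) : ∃ k, p^[k] v = r := by
  obtain ⟨k, hk⟩ := h.1.2 v
  exact ⟨k, by simpa using hk⟩

lemma up_child (h : UpForest r p) (v : Fin n) (hv : v ≠ r) (hpv : p v = r) : v < r := by
  have := h.2 ⟨v, by simpa using hv⟩ (by simp [Jof, hpv])
  exact this

lemma up_nofix (h : UpForest r p) (v : Fin n) (hv : v ≠ r) : p v ≠ v := by
  intro hpv
  obtain ⟨k, hk⟩ := up_reach h v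
  rw [Function.iterate_fixed hpv] at hk
  exact hv hk

/-- height of a vertex -/
noncomputable def hgt (h : UpForest r p) (v : Fin n) : ℕ := Nat.find (up_reach h v)

lemma hgt_spec (h : UpForest r p) (v : Fin n) : p^[hgt h v] v = r := Nat.find_spec (up_reach h v)

lemma hgt_min (h : UpForest r p) (v : Fin n) {j : ℕ} (hj : j < hgt h v) : p^[j] v ≠ r :=
  Nat.find_min (up_reach h v) hj

lemma hgt_r (h : UpForest r p) : hgt h r = 0 := by
  have : p^[0] r = r := rfl
  exact Nat.eq_zero_of_le_zero (Nat.find_le this)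

lemma hgt_eq_zero (h : UpForest r p) {v : Fin n} (hv : hgt h v = 0) : v = r := by
  have := hgt_spec h v
  rwa [hv] at this

lemma hgt_succ (h : UpForest r p) {v : Fin n} (hv : v ≠ r) :
    hgt h v = hgt h (p v) + 1 := by
  have h0 : hgt h v ≠ 0 := fun h0 => hv (hgt_eq_zero h h0)
  obtain ⟨k, hk⟩ := Nat.exists_eq_succ_of_ne_zero h0
  have h1 : p^[k] (p v) = r := by
    have := hgt_spec h v
    rwa [hk, Function.iterate_succ_apply] at this
  have h2 : hgt h (p v) ≤ k := Nat.find_le h1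
  have h3 : hgt h v ≤ hgt h (p v) + 1 := by
    apply Nat.find_le
    rw [Function.iterate_succ_apply]
    exact hgt_spec h (p v)
  omega

lemma iterate_ne_zero_fix (h : UpForest r p) {v : Fin n} (hv : v ≠ r) {m : ℕ}
    (hm : 1 ≤ m) : p^[m] v ≠ v := by
  intro heq
  -- hgt decreases along iterates
  have key : ∀ i, i ≤ hgt h v → hgt h (p^[i] v) = hgt h v - i := by
    intro i
    induction i with
    | zero => intro _; simp
    | succ i ih =>
      intro hi
      have hne : p^[i] v ≠ r := hgt_min h v (by omega)
      have := hgt_succ h hne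
      rw [Function.iterate_succ_apply']
      have hih := ih (by omega)
      omega
  by_cases hm2 : m ≤ hgt h v
  · have := key m hm2
    rw [heq] at this
    have hvr : hgt h v ≠ 0 := fun h0 => hv (hgt_eq_zero h h0)
    omega
  · have : p^[m] v = r := by
      have hsplit : m = (m - hgt h v) + hgt h v := by omega
      rw [hsplit, Function.iterate_add_apply, hgt_spec h v]
      exact Function.iterate_fixed (up_fix h) _
    rw [heq] at this
    exact hv this

lemma adj_iff (h : UpForest r p) (a b : Fin n) :
    (graphOf r p).Adj a b ↔ ((a ≠ r ∧ p a = b) ∨ (b ≠ r ∧ p b = a)) := by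
  rw [graphOf, SimpleGraph.fromRel_adj]
  constructor
  · rintro ⟨-, hab⟩; exact hab
  · intro hab
    refine ⟨?_, hab⟩
    rcases hab with ⟨ha, hpa⟩ | ⟨hb, hpb⟩
    · rw [← hpa]; exact fun e => up_nofix h a ha e.symm
    · rw [← hpb]; exact fun e => up_nofix h b hb e

lemma adj_parent (h : UpForest r p) {v : Fin n} (hv : v ≠ r) : (graphOf r p).Adj v (p v) :=
  (adj_iff h v (p v)).mpr (Or.inl ⟨hv, rfl⟩)

lemma reachable_root (h : UpForest r p) (v : Fin n) : (graphOf r p).Reachable v r := by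
  obtain ⟨k, hk⟩ := up_reach h v
  clear hk
  -- strong induction on hgt
  suffices H : ∀ N v, hgt h v ≤ N → (graphOf r p).Reachable v r by
    exact H (hgt h v) v le_rfl
  intro N
  induction N with
  | zero =>
    intro v hv
    rw [hgt_eq_zero h (Nat.le_zero.mp hv)]
  | succ N ih =>
    intro v hv
    by_cases hvr : v = r
    · rw [hvr]
    · have := hgt_succ h hvr
      exact ((adj_parent h hvr).toWalk.reachable).trans (ih (p v) (by omega))

lemma connected_graphOf (h : UpForest r p) : (graphOf r p).Connected := by
  have : Nonempty (Fin n) := ⟨r⟩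
  rw [SimpleGraph.connected_iff]
  refine ⟨fun u v => ?_, this⟩
  exact (reachable_root h u).trans (reachable_root h v).symm

lemma edge_inj (h : UpForest r p) :
    Set.InjOn (fun v => s(v, p v)) ((univ : Finset (Fin n)).erase r : Finset (Fin n)) := by
  intro a ha b hb hab
  simp only [Finset.coe_erase, Set.mem_diff] at ha hb
  have har : a ≠ r := by simpa using ha.2
  have hbr : b ≠ r := by simpa using hb.2
  simp only [Sym2.eq_iff] at hab
  rcases hab with ⟨h1, h2⟩ | ⟨h1, h2⟩
  · exact h1
  · -- a = p b and p a = b : 2-cycle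
    by_contra hne
    have : p^[2] a = a := by
      show p (p a) = a
      rw [h2, ← h1]
    exact iterate_ne_zero_fix h har (by norm_num) this

lemma edgeFinset_graphOf (h : UpForest r p) [Fintype (graphOf r p).edgeSet] :
    (graphOf r p).edgeFinset = (univ.erase r).image (fun v => s(v, p v)) := by
  ext e
  rw [SimpleGraph.mem_edgeFinset]
  induction e with
  | _ a b =>
    rw [SimpleGraph.mem_edgeSet, adj_iff h]
    constructor
    · rintro (⟨ha, hpa⟩ | ⟨hb, hpb⟩)
      · exact Finset.mem_image.mpr ⟨a, by simp [ha], by rw [hpa]⟩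
      · exact Finset.mem_image.mpr ⟨b, by simp [hb], by rw [hpb, Sym2.eq_swap]⟩
    · intro he
      obtain ⟨v, hv, hve⟩ := Finset.mem_image.mp he
      have hvr : v ≠ r := by simp at hv; exact hv
      rw [Sym2.eq_iff] at hve
      rcases hve with ⟨h1, h2⟩ | ⟨h1, h2⟩
      · left; subst h1; exact ⟨hvr, h2⟩
      · right; subst h1; exact ⟨hvr, h2⟩

lemma card_edge_graphOf (h : UpForest r p) [Fintype (graphOf r p).edgeSet] :
    (graphOf r p).edgeFinset.card = n - 1 := by
  rw [edgeFinset_graphOf h, Finset.card_image_of_injOn (edge_inj h),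
    Finset.card_erase_of_mem (mem_univ r)]
  simp

lemma acyclic_graphOf (h : UpForest r p) : (graphOf r p).IsAcyclic := by
  rw [SimpleGraph.isAcyclic_iff_forall_adj_isBridge]
  intro v w hadj
  -- WLOG p-direction
  suffices H : ∀ v w, v ≠ r → p v = w → (graphOf r p).IsBridge s(v, w) by
    rcases (adj_iff h v w).mp hadj with ⟨hv, hpv⟩ | ⟨hw, hpw⟩
    · exact H v w hv hpv
    · rw [Sym2.eq_swap]; exact H w v hw hpw
  clear hadj v w
  intro v w hv hpv
  rw [SimpleGraph.isBridge_iff]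
  intro hreach
  -- invariant : A x := ∃ j, p^[j] x = v
  set G' := graphOf r p \ SimpleGraph.fromEdgeSet {s(v, w)} with hG'
  have hinv : ∀ (a b : Fin n), G'.Adj a b → ((∃ j, p^[j] a = v) ↔ (∃ j, p^[j] b = v)) := by
    intro a b hab
    rw [hG', SimpleGraph.sdiff_adj, SimpleGraph.fromEdgeSet_adj] at hab
    obtain ⟨hab1, hab2⟩ := hab
    have hne : a ≠ b := hab1.ne
    have hedge : s(a, b) ≠ s(v, w) := fun he => hab2 ⟨by simp [he], hne⟩
    have main : ∀ a b : Fin n, a ≠ r → p a = b → s(a,b) ≠ s(v,w) →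
        ((∃ j, p^[j] a = v) ↔ (∃ j, p^[j] b = v)) := by
      intro a b har hpab hedge
      have hav : a ≠ v := by
        intro he
        apply hedge
        rw [he, hpab.symm, he, hpv]
      constructor
      · rintro ⟨j, hj⟩
        rcases Nat.eq_zero_or_pos j with h0 | h0
        · exfalso; apply hav; rw [← hj, h0]; rfl
        · obtain ⟨i, rfl⟩ := Nat.exists_eq_succ_of_ne_zero (by omega : j ≠ 0)
          rw [Function.iterate_succ_apply, hpab] at hj
          exact ⟨i, hj⟩
      · rintro ⟨j, hj⟩
        refine ⟨j + 1, ?_⟩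
        rw [Function.iterate_succ_apply, hpab]
        exact hj
    rcases (adj_iff h a b).mp hab1 with ⟨ha, hpa⟩ | ⟨hb, hpb⟩
    · exact main a b ha hpa hedge
    · exact (main b a hb hpb (by rw [Sym2.eq_swap]; exact hedge)).symm
  obtain ⟨wk⟩ := hreach
  have hAv : ∃ j, p^[j] v = v := ⟨0, rfl⟩
  have hwalk : ∀ {a b : Fin n} (q : G'.Walk a b), (∃ j, p^[j] a = v) → (∃ j, p^[j] b = v) := by
    intro a b q
    induction q with
    | nil => exact id
    | cons hadj q ih => intro ha; exact ih ((hinv _ _ hadj).mp ha)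
  have hAw : ∃ j, p^[j] w = v := hwalk wk hAv
  obtain ⟨j, hj⟩ := hAw
  have : p^[j+1] v = v := by
    rw [Function.iterate_succ_apply, hpv]
    exact hj
  exact iterate_ne_zero_fix h hv (by omega) this

lemma isTree_graphOf (h : UpForest r p) : (graphOf r p).IsTree :=
  ⟨connected_graphOf h, acyclic_graphOf h⟩

lemma rootcond_graphOf (h : UpForest r p) (v : Fin n) (hadj : (graphOf r p).Adj r v) :
    v < r := by
  rcases (adj_iff h r v).mp hadj with ⟨hr, _⟩ | ⟨hv, hpv⟩
  · exact absurd rfl hr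
  · exact up_child h v hv hpv

section Inj

variable {p' : Fin n → Fin n}

lemma hgt_mono (h : UpForest r p) (h' : UpForest r p')
    (heq : graphOf r p = graphOf r p') :
    ∀ N (v : Fin n), hgt h' v ≤ N → hgt h v ≤ hgt h' v := by
  intro N
  induction N with
  | zero =>
    intro v hv
    have : v = r := hgt_eq_zero h' (Nat.le_zero.mp hv)
    rw [this, hgt_r h, hgt_r h']
  | succ N ih =>
    intro v hv
    by_cases hvr : v = r
    · rw [hvr, hgt_r h]; omega
    · have hadj' : (graphOf r p').Adj v (p' v) := adj_parent h' hvr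
      have hadj : (graphOf r p).Adj v (p' v) := by rw [heq]; exact hadj'
      have hs' : hgt h' v = hgt h' (p' v) + 1 := hgt_succ h' hvr
      have ihw : hgt h (p' v) ≤ hgt h' (p' v) := ih (p' v) (by omega)
      rcases (adj_iff h v (p' v)).mp hadj with ⟨-, hpv⟩ | ⟨hw, hpw⟩
      · have : hgt h v = hgt h (p v) + 1 := hgt_succ h hvr
        rw [hpv] at this
        omega
      · have : hgt h (p' v) = hgt h (p (p' v)) + 1 := hgt_succ h hw
        rw [hpw] at this
        omega

lemma graphOf_inj (h : UpForest r p) (h' : UpForest r p')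
    (heq : graphOf r p = graphOf r p') : p = p' := by
  have hgt_eq : ∀ v, hgt h v = hgt h' v := fun v =>
    le_antisymm (hgt_mono h h' heq (hgt h' v) v le_rfl)
      (hgt_mono h' h heq.symm (hgt h v) v le_rfl)
  funext v
  by_cases hvr : v = r
  · rw [hvr, up_fix h, up_fix h']
  · have hadj : (graphOf r p').Adj v (p v) := by rw [← heq]; exact adj_parent h hvr
    rcases (adj_iff h' v (p v)).mp hadj with ⟨-, hpv⟩ | ⟨hpvr, hppv⟩
    · exact hpv.symm
    · exfalso
      have h1 : hgt h' (p v) = hgt h' v + 1 := by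
        have := hgt_succ h' hpvr
        rwa [hppv] at this
      have h2 : hgt h v = hgt h (p v) + 1 := hgt_succ h hvr
      rw [hgt_eq v, hgt_eq (p v)] at h2
      omega

end Inj

section Surj

lemma exists_upforest_of_tree (g : SimpleGraph (Fin n)) (root : Fin n) (htree : g.IsTree)
    (hroot : ∀ v, g.Adj root v → v < root) :
    ∃ p : Fin n → Fin n, UpForest root p ∧ graphOf root p = g := by
  classical
  have hconn : g.Connected := htree.isConnected
  have hstep : ∀ v : Fin n, v ≠ root → ∃ w, g.Adj v w ∧ g.dist w root + 1 = g.dist v root := by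
    intro v hv
    have hre : g.Reachable v root := hconn.preconnected v root
    obtain ⟨wk, hwk⟩ := hre.exists_walk_length_eq_dist
    cases wk with
    | nil => exact absurd rfl hv
    | @cons _ w _ hadj q =>
      refine ⟨w, hadj, ?_⟩
      rw [SimpleGraph.Walk.length_cons] at hwk
      have h1 : g.dist w root ≤ q.length := SimpleGraph.dist_le q
      obtain ⟨qw, hqw⟩ := (hconn.preconnected w root).exists_walk_length_eq_dist
      have h2 : g.dist v root ≤ qw.length + 1 := by
        have := SimpleGraph.dist_le (SimpleGraph.Walk.cons hadj qw)
        rwa [SimpleGraph.Walk.length_cons] at this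
      omega
  set p : Fin n → Fin n :=
    fun v => if hv : v = root then v else Classical.choose (hstep v hv) with hpdef
  have hp_spec : ∀ v (hv : v ≠ root),
      g.Adj v (p v) ∧ g.dist (p v) root + 1 = g.dist v root := by
    intro v hv
    have := Classical.choose_spec (hstep v hv)
    simpa [hpdef, dif_neg hv] using this
  have hp_root : p root = root := by simp [hpdef]
  have hreach : ∀ v : Fin n, ∃ k, p^[k] v = root := by
    suffices H : ∀ N (v : Fin n), g.dist v root ≤ N → ∃ k, p^[k] v = root by
      intro v; exact H (g.dist v root) v le_rfl
    intro N
    induction N with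
    | zero =>
      intro v hv
      have : v = root := ((hconn.preconnected v root).dist_eq_zero_iff).mp (Nat.le_zero.mp hv)
      exact ⟨0, this⟩
    | succ N ih =>
      intro v hv
      by_cases hvr : v = root
      · exact ⟨0, hvr⟩
      · obtain ⟨-, hd⟩ := hp_spec v hvr
        obtain ⟨k, hk⟩ := ih (p v) (by omega)
        exact ⟨k + 1, by rw [Function.iterate_succ_apply]; exact hk⟩
  have hup : UpForest root p := by
    refine ⟨⟨?_, ?_⟩, ?_⟩
    · intro s hs
      rw [mem_singleton] at hs
      rw [hs, hp_root]
    · intro v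
      obtain ⟨k, hk⟩ := hreach v
      exact ⟨k, by simp [hk]⟩
    · intro x hx
      simp only [Jof, mem_filter, mem_univ, true_and, mem_singleton] at hx
      have hxr : x.1 ≠ root := by
        have := x.2; simpa using this
      have hadj : g.Adj x.1 root := by
        have := (hp_spec x.1 hxr).1
        rwa [hx] at this
      exact hroot x.1 hadj.symm
  refine ⟨p, hup, ?_⟩
  have le1 : graphOf root p ≤ g := by
    intro a b hadj
    rcases (adj_iff hup a b).mp hadj with ⟨ha, hpa⟩ | ⟨hb, hpb⟩
    · have := (hp_spec a ha).1
      rwa [hpa] at this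
    · have := (hp_spec b hb).1
      rw [hpb] at this
      exact this.symm
  letI : Fintype (graphOf root p).edgeSet := Fintype.ofFinite _
  letI : Fintype g.edgeSet := Fintype.ofFinite _
  have hsub : (graphOf root p).edgeFinset ⊆ g.edgeFinset :=
    SimpleGraph.edgeFinset_subset_edgeFinset.mpr le1
  have hcard1 : (graphOf root p).edgeFinset.card = n - 1 := card_edge_graphOf hup
  have hcard2 : g.edgeFinset.card + 1 = n := by
    have := htree.card_edgeFinset
    simpa using this
  have heq : (graphOf root p).edgeFinset = g.edgeFinset :=
    Finset.eq_of_subset_of_card_le hsub (by omega)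
  exact SimpleGraph.edgeFinset_inj.mp heq

end Surj

end Stage1



theorem stage1_card {n : ℕ} :
    Nat.card {gr : SimpleGraph (Fin n) × Fin n //
      gr.1.IsTree ∧ ∀ v : Fin n, gr.1.Adj gr.2 v → v < gr.2} =
    Nat.card {q : Fin n × (Fin n → Fin n) // UpForest q.1 q.2} := by
  apply Nat.card_congr
  refine (Equiv.ofBijective
    (fun q : {q : Fin n × (Fin n → Fin n) // UpForest q.1 q.2} =>
      (⟨(graphOf q.1.1 q.1.2, q.1.1), isTree_graphOf q.2, fun v => rootcond_graphOf q.2 v⟩ :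
        {gr : SimpleGraph (Fin n) × Fin n //
          gr.1.IsTree ∧ ∀ v : Fin n, gr.1.Adj gr.2 v → v < gr.2}))
    ⟨?_, ?_⟩).symm
  · rintro ⟨⟨r, p⟩, hq⟩ ⟨⟨r', p'⟩, hq'⟩ h
    simp only [Subtype.mk.injEq, Prod.mk.injEq] at h
    obtain ⟨hG, hr⟩ := h
    subst hr
    have hpp : p = p' := graphOf_inj hq hq' hG
    subst hpp
    rfl
  · rintro ⟨⟨g, root⟩, htree, hroot⟩
    obtain ⟨p, hup, hg⟩ := exists_upforest_of_tree g root htree hroot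
    refine ⟨⟨(root, p), hup⟩, ?_⟩
    apply Subtype.ext
    simp [hg]

end Stmt10

/-- The number of uprooted trees on `[n]`, i.e. rooted labeled trees on vertex set
`Fin n` in which the root is larger than all of its children (its neighbors),
is `(n-1)^(n-1)`. -/
theorem stmt10 (n : ℕ) (hn : 1 ≤ n) :
    Nat.card {p : SimpleGraph (Fin n) × Fin n //
        p.1.IsTree ∧ ∀ v : Fin n, p.1.Adj p.2 v → v < p.2} =
      (n - 1) ^ (n - 1) := by
  rcases (by omega : n = 1 ∨ 2 ≤ n) with rfl | hn2
  · simp only [Nat.sub_self, pow_zero]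
    rw [Nat.card_eq_one_iff_unique]
    constructor
    · constructor
      rintro ⟨⟨g, r⟩, -⟩ ⟨⟨g', r'⟩, -⟩
      apply Subtype.ext
      have hgr : g = g' := by
        ext a b
        constructor <;> intro h <;> (exfalso; exact h.ne (Subsingleton.elim a b))
      show (g, r) = (g', r')
      rw [hgr, Subsingleton.elim r r']
    · refine ⟨⟨(⊥, 0), ⟨?_, SimpleGraph.isAcyclic_bot⟩, by simp⟩⟩
      rw [SimpleGraph.connected_iff]
      exact ⟨fun u v => by rw [Subsingleton.elim u v], ⟨0⟩⟩
  · rw [Stmt10.stage1_card, Stmt10.card_Q hn2]
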